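/- arXiv:2112.02179 — 3 statements merged into one kernel-verified Lean document; each statement's English description precedes it below -/
import Mathlib

section
/- Let x₁,...,x_n ∈ R^d be nonzero vectors, α₁,...,α_n ∈ R scalars, and h_{∥,i}, h_{⊥,i} > 0 weights. Define M = Σ_i [α_i²(h_{∥,i} - h_{⊥,i})/‖x_i‖² · x_i x_i^T + α_i² h_{⊥,i} I]. If M is invertible, then c* = M^{-1} Σ_i α_i h_{∥,i} x_i is the unique minimizer of c ↦ Σ_i h_{∥,i}‖r_∥(x_i, α_i c)‖² + h_{⊥,i}‖r_⊥(x_i, α_i c)‖², where r_∥(x, y) = x - (⟨x,y⟩/‖x‖²)x and r_⊥(x, y) = (⟨x,y⟩/‖x‖²)x - y. -/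
/-- Parallel residual `r_∥(x, y) = x - (⟨x,y⟩/‖x‖²)x`. -/
noncomputable def rpar {d : ℕ} (x y : EuclideanSpace ℝ (Fin d)) : EuclideanSpace ℝ (Fin d) :=
  x - ((inner ℝ x y : ℝ) / ‖x‖ ^ 2) • x

/-- Orthogonal residual `r_⊥(x, y) = (⟨x,y⟩/‖x‖²)x - y`. -/
noncomputable def rperp {d : ℕ} (x y : EuclideanSpace ℝ (Fin d)) : EuclideanSpace ℝ (Fin d) :=
  ((inner ℝ x y : ℝ) / ‖x‖ ^ 2) • x - y

/-- The anisotropic clustering loss for points `x i`, scalings `α i`, weights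
`h_{∥,i}, h_{⊥,i}`, with center `c`. -/
noncomputable def anisoLoss {n d : ℕ} (x : Fin n → EuclideanSpace ℝ (Fin d))
    (α hpar hperp : Fin n → ℝ) (c : EuclideanSpace ℝ (Fin d)) : ℝ :=
  ∑ i, (hpar i * ‖rpar (x i) (α i • c)‖ ^ 2 + hperp i * ‖rperp (x i) (α i • c)‖ ^ 2)

lemma point_expand {d : ℕ} (x c : EuclideanSpace ℝ (Fin d)) (hx : x ≠ 0)
    (a hp hq : ℝ) :
    hp * ‖rpar x (a • c)‖ ^ 2 + hq * ‖rperp x (a • c)‖ ^ 2 =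
      (a ^ 2 * (hp - hq) / ‖x‖ ^ 2) * (inner ℝ x c : ℝ) ^ 2 + a ^ 2 * hq * ‖c‖ ^ 2
        - 2 * (a * hp) * (inner ℝ x c : ℝ) + hp * ‖x‖ ^ 2 := by
  have hx2 : (‖x‖ : ℝ) ^ 2 ≠ 0 := pow_ne_zero _ (norm_ne_zero_iff.mpr hx)
  set t : ℝ := inner ℝ x c with ht
  have hin : (inner ℝ x (a • c) : ℝ) = a * t := real_inner_smul_right x c a
  have h1 : ‖rpar x (a • c)‖ ^ 2 = (1 - a * t / ‖x‖ ^ 2) ^ 2 * ‖x‖ ^ 2 := by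
    have : rpar x (a • c) = (1 - a * t / ‖x‖ ^ 2) • x := by
      rw [rpar, hin, sub_smul, one_smul]
    rw [this, norm_smul, mul_pow, Real.norm_eq_abs, sq_abs]
  have h2 : ‖rperp x (a • c)‖ ^ 2 = (a * t / ‖x‖ ^ 2) ^ 2 * ‖x‖ ^ 2
      - 2 * (a * t / ‖x‖ ^ 2) * (a * t) + a ^ 2 * ‖c‖ ^ 2 := by
    rw [rperp, hin]
    rw [norm_sub_sq_real, real_inner_smul_left, hin, norm_smul, norm_smul, mul_pow, mul_pow,
      Real.norm_eq_abs, Real.norm_eq_abs, sq_abs, sq_abs]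
    ring
  rw [h1, h2]
  field_simp
  ring

/-- With `M = Σ_i [α_i²(h_{∥,i} - h_{⊥,i})/‖x_i‖² x_i x_iᵀ + α_i² h_{⊥,i} I]`
invertible, `c* = M⁻¹ Σ_i α_i h_{∥,i} x_i` is the unique minimizer of the anisotropic
projective clustering loss. -/
theorem stmt11 {n d : ℕ} (x : Fin n → EuclideanSpace ℝ (Fin d)) (α hpar hperp : Fin n → ℝ)
    (hx : ∀ i, x i ≠ 0) (hpq : ∀ i, 0 < hperp i ∧ hperp i ≤ hpar i)
    (M : Matrix (Fin d) (Fin d) ℝ)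
    (hM : M = ∑ i, (((α i) ^ 2 * (hpar i - hperp i) / ‖x i‖ ^ 2) •
          Matrix.of (fun a b => x i a * x i b) +
        ((α i) ^ 2 * hperp i) • (1 : Matrix (Fin d) (Fin d) ℝ)))
    (hinv : IsUnit M.det)
    (cstar : EuclideanSpace ℝ (Fin d))
    (hcstar : ∀ a : Fin d,
      cstar a = M⁻¹.mulVec (fun b => (∑ i, (α i * hpar i) • x i) b) a) :
    (∀ c : EuclideanSpace ℝ (Fin d),
        anisoLoss x α hpar hperp cstar ≤ anisoLoss x α hpar hperp c) ∧
      ∀ c : EuclideanSpace ℝ (Fin d),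
        anisoLoss x α hpar hperp c = anisoLoss x α hpar hperp cstar → c = cstar := by
  classical
  set g : Fin n → ℝ := fun i => (α i) ^ 2 * (hpar i - hperp i) / ‖x i‖ ^ 2 with hg
  set e : Fin n → ℝ := fun i => (α i) ^ 2 * hperp i with he
  have hinner : ∀ (u w : EuclideanSpace ℝ (Fin d)), (inner ℝ u w : ℝ) = ∑ a, u a * w a := by
    intro u w
    simp [PiLp.inner_apply, RCLike.inner_apply, conj_trivial]
    exact Finset.sum_congr rfl fun _ _ => mul_comm _ _
  -- mulVec formula
  have hmv : ∀ (v : EuclideanSpace ℝ (Fin d)) (a : Fin d),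
      M.mulVec (fun b => v b) a = ∑ i, (g i * (inner ℝ (x i) v : ℝ) * x i a + e i * v a) := by
    intro v a
    rw [hM]
    simp only [Matrix.mulVec, dotProduct, Matrix.sum_apply, Matrix.add_apply,
      Matrix.smul_apply, Matrix.one_apply, Matrix.of_apply, smul_eq_mul, Finset.sum_mul]
    rw [Finset.sum_comm]
    refine Finset.sum_congr rfl fun i _ => ?_
    have hstep : ∀ b : Fin d,
        (g i * (x i a * x i b) + e i * (if a = b then (1:ℝ) else 0)) * v b
        = g i * x i a * (x i b * v b) + (if a = b then e i * v b else 0) := by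
      intro b; by_cases h : a = b <;> simp [h] <;> ring
    rw [Finset.sum_congr rfl fun b _ => hstep b, Finset.sum_add_distrib]
    simp only [Finset.sum_ite_eq, Finset.mem_univ, if_true]
    rw [hinner, Finset.mul_sum, Finset.sum_mul]
    congr 1
    exact Finset.sum_congr rfl fun b _ => by ring
  -- normal equation
  have hMc : ∀ a : Fin d, M.mulVec (fun b => cstar b) a = ∑ i, (α i * hpar i) * x i a := by
    intro a
    have h1 : (fun b => cstar b) = M⁻¹.mulVec (fun b => (∑ i, (α i * hpar i) • x i) b) := by
      funext b; exact hcstar b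
    rw [h1, Matrix.mulVec_mulVec, Matrix.mul_nonsing_inv M hinv, Matrix.one_mulVec]
    rw [show ((∑ i, (α i * hpar i) • x i) a) = ∑ i, ((α i * hpar i) • x i) a from
      by simp]
    exact Finset.sum_congr rfl fun i _ => by simp [smul_eq_mul]
  -- key bilinear identity at cstar
  have hBstar : ∀ w : EuclideanSpace ℝ (Fin d),
      ∑ i, (g i * (inner ℝ (x i) cstar : ℝ) * (inner ℝ (x i) w : ℝ)
        + e i * (inner ℝ cstar w : ℝ))
      = ∑ i, (α i * hpar i) * (inner ℝ (x i) w : ℝ) := by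
    intro w
    have h1 : ∑ a, (M.mulVec (fun b => cstar b)) a * w a
        = ∑ i, (g i * (inner ℝ (x i) cstar : ℝ) * (inner ℝ (x i) w : ℝ)
          + e i * (inner ℝ cstar w : ℝ)) := by
      simp only [hmv, Finset.sum_mul]
      rw [Finset.sum_comm]
      refine Finset.sum_congr rfl fun i _ => ?_
      rw [hinner (x i) w, hinner cstar w, Finset.mul_sum, Finset.mul_sum,
        ← Finset.sum_add_distrib]
      exact Finset.sum_congr rfl fun a _ => by ring
    have h2 : ∑ a, (M.mulVec (fun b => cstar b)) a * w a
        = ∑ i, (α i * hpar i) * (inner ℝ (x i) w : ℝ) := by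
      simp only [hMc, Finset.sum_mul]
      rw [Finset.sum_comm]
      refine Finset.sum_congr rfl fun i _ => ?_
      rw [hinner (x i) w, Finset.mul_sum]
      exact Finset.sum_congr rfl fun a _ => by ring
    rw [← h1, h2]
  -- loss expansion
  have hLoss : ∀ c : EuclideanSpace ℝ (Fin d), anisoLoss x α hpar hperp c
      = ∑ i, (g i * (inner ℝ (x i) c : ℝ) ^ 2 + e i * ‖c‖ ^ 2
        - 2 * (α i * hpar i) * (inner ℝ (x i) c : ℝ) + hpar i * ‖x i‖ ^ 2) := by
    intro c
    unfold anisoLoss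
    refine Finset.sum_congr rfl fun i _ => ?_
    rw [point_expand (x i) c (hx i) (α i) (hpar i) (hperp i)]
  -- quadratic decomposition
  have hkey : ∀ c : EuclideanSpace ℝ (Fin d),
      anisoLoss x α hpar hperp c = anisoLoss x α hpar hperp cstar
        + ∑ i, (g i * (inner ℝ (x i) (c - cstar) : ℝ) ^ 2 + e i * ‖c - cstar‖ ^ 2) := by
    intro c
    have hb := hBstar (c - cstar)
    rw [hLoss c, hLoss cstar]
    have expand : ∀ i, g i * (inner ℝ (x i) c : ℝ) ^ 2 + e i * ‖c‖ ^ 2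
          - 2 * (α i * hpar i) * (inner ℝ (x i) c : ℝ) + hpar i * ‖x i‖ ^ 2
        = (g i * (inner ℝ (x i) cstar : ℝ) ^ 2 + e i * ‖cstar‖ ^ 2
            - 2 * (α i * hpar i) * (inner ℝ (x i) cstar : ℝ) + hpar i * ‖x i‖ ^ 2)
          + (g i * (inner ℝ (x i) (c - cstar) : ℝ) ^ 2 + e i * ‖c - cstar‖ ^ 2)
          + 2 * ((g i * (inner ℝ (x i) cstar : ℝ) * (inner ℝ (x i) (c - cstar) : ℝ)
              + e i * (inner ℝ cstar (c - cstar) : ℝ))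
            - (α i * hpar i) * (inner ℝ (x i) (c - cstar) : ℝ)) := by
      intro i
      have e1 : (inner ℝ (x i) (c - cstar) : ℝ) = (inner ℝ (x i) c : ℝ) - (inner ℝ (x i) cstar : ℝ) :=
        inner_sub_right _ _ _
      have e2 : ‖c - cstar‖ ^ 2 = ‖c‖ ^ 2 - 2 * (inner ℝ c cstar : ℝ) + ‖cstar‖ ^ 2 :=
        norm_sub_sq_real c cstar
      have e3 : (inner ℝ cstar (c - cstar) : ℝ) = (inner ℝ c cstar : ℝ) - ‖cstar‖ ^ 2 := by
        rw [inner_sub_right, real_inner_self_eq_norm_sq, real_inner_comm]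
      rw [e1, e2, e3]; ring
    rw [Finset.sum_congr rfl fun i _ => expand i, Finset.sum_add_distrib,
      Finset.sum_add_distrib, ← Finset.mul_sum, Finset.sum_sub_distrib, hb, sub_self,
      mul_zero, add_zero]
  -- nonnegativity of the quadratic form
  have hQnn : ∀ v : EuclideanSpace ℝ (Fin d), ∀ i : Fin n,
      0 ≤ g i * (inner ℝ (x i) v : ℝ) ^ 2 + e i * ‖v‖ ^ 2 := by
    intro v i
    have hg0 : 0 ≤ g i := by
      simp only [hg]
      exact div_nonneg (mul_nonneg (sq_nonneg _) (by linarith [(hpq i).2])) (sq_nonneg _)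
    have he0 : 0 ≤ e i := by
      simp only [he]
      exact mul_nonneg (sq_nonneg _) (hpq i).1.le
    exact add_nonneg (mul_nonneg hg0 (sq_nonneg _)) (mul_nonneg he0 (sq_nonneg _))
  constructor
  · intro c
    rw [hkey c]
    have : 0 ≤ ∑ i, (g i * (inner ℝ (x i) (c - cstar) : ℝ) ^ 2 + e i * ‖c - cstar‖ ^ 2) :=
      Finset.sum_nonneg fun i _ => hQnn _ i
    linarith
  · intro c hc
    have hQ0 : ∑ i, (g i * (inner ℝ (x i) (c - cstar) : ℝ) ^ 2 + e i * ‖c - cstar‖ ^ 2) = 0 := by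
      have hk := hkey c
      rw [hc] at hk
      linarith
    have hterm : ∀ i : Fin n,
        g i * (inner ℝ (x i) (c - cstar) : ℝ) ^ 2 + e i * ‖c - cstar‖ ^ 2 = 0 :=
      fun i => (Finset.sum_eq_zero_iff_of_nonneg (fun i _ => hQnn _ i)).mp hQ0 i
        (Finset.mem_univ i)
    by_contra hne
    have hv : c - cstar ≠ 0 := sub_ne_zero.mpr hne
    have hv2 : (0:ℝ) < ‖c - cstar‖ ^ 2 := pow_pos (norm_pos_iff.mpr hv) 2
    have hα : ∀ i, α i = 0 := by
      intro i
      have h1 := hterm i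
      have hg0 : 0 ≤ g i := by
        simp only [hg]
        exact div_nonneg (mul_nonneg (sq_nonneg _) (by linarith [(hpq i).2])) (sq_nonneg _)
      have he0 : 0 ≤ e i := by
        simp only [he]
        exact mul_nonneg (sq_nonneg _) (hpq i).1.le
      have h2 : 0 ≤ g i * (inner ℝ (x i) (c - cstar) : ℝ) ^ 2 := mul_nonneg hg0 (sq_nonneg _)
      have h3 : 0 ≤ e i * ‖c - cstar‖ ^ 2 := mul_nonneg he0 (sq_nonneg _)
      have he0 : e i * ‖c - cstar‖ ^ 2 = 0 := by linarith
      have : e i = 0 := by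
        rcases mul_eq_zero.mp he0 with h | h
        · exact h
        · exact absurd h hv2.ne'
      have hperp0 := (hpq i).1
      have : (α i) ^ 2 = 0 := by
        rw [he] at this
        rcases mul_eq_zero.mp this with h | h
        · exact h
        · exact absurd h hperp0.ne'
      exact pow_eq_zero_iff (n := 2) (by norm_num) |>.mp this
    have hM0 : M = 0 := by
      rw [hM]
      apply Finset.sum_eq_zero
      intro i _
      simp [hα i]
    have hne' : Nonempty (Fin d) := by
      by_contra hemp
      have : IsEmpty (Fin d) := not_nonempty_iff.mp hemp
      exact hv (PiLp.ext fun a => this.elim a)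
    rw [hM0, Matrix.det_zero] at hinv
    simp at hinv
end

section
/- The projective k-clustering objective satisfies: min over centers c_1,...,c_k ≠ 0 of Σ_{i=1}^n min_{j∈[k]} ‖x_i - (⟨x_i,c_j⟩/‖c_j‖²)c_j‖² = ‖X‖_F² - max over partitions X_1,...,X_k of the rows of X of Σ_{j=1}^k σ₁(X_j)², where σ₁(X_j) is the top singular value of the submatrix X_j. -/
open Finset

private lemma pt_lemma {d : ℕ} (x c : EuclideanSpace ℝ (Fin d)) (hc : c ≠ 0) :
    ‖x - ((inner ℝ x c : ℝ) / ‖c‖ ^ 2) • c‖ ^ 2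
      = ‖x‖ ^ 2 - (inner ℝ x ((‖c‖⁻¹) • c) : ℝ) ^ 2 := by
  have hcn : ‖c‖ ≠ 0 := norm_ne_zero_iff.2 hc
  rw [norm_sub_sq_real, real_inner_smul_right, norm_smul, real_inner_smul_right]
  rw [Real.norm_eq_abs, mul_pow, sq_abs]
  field_simp
  ring

private lemma myInfSub (a : ℝ) {k : ℕ} (hk : 0 < k) (f : Fin k → ℝ) :
    (⨅ j, (a - f j)) = a - ⨆ j, f j := by
  haveI : Nonempty (Fin k) := ⟨⟨0, hk⟩⟩
  obtain ⟨j0, hj0⟩ := Finite.exists_max f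
  have hsup : (⨆ j, f j) = f j0 :=
    le_antisymm (ciSup_le hj0) (le_ciSup (Set.Finite.bddAbove (Set.finite_range f)) j0)
  refine le_antisymm ?_ ?_
  · exact (ciInf_le (Set.Finite.bddBelow (Set.finite_range _)) j0).trans (by rw [hsup])
  · exact le_ciInf fun j => by have := hj0 j; rw [hsup]; linarith

/-- The projective `k`-clustering objective: the infimum over nonzero centers
`c_1, …, c_k` of `Σ_i min_j ‖x_i - (⟨x_i,c_j⟩/‖c_j‖²)c_j‖²` equals
`‖X‖_F² - max over partitions (assignments g) of Σ_j σ₁(X_j)²`, where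
`σ₁(X_j)² = sup_{‖v‖=1} Σ_{i : g i = j} ⟨x_i, v⟩²`. -/
theorem stmt16 {n d k : ℕ} (hd : 0 < d) (hk : 0 < k)
    (x : Fin n → EuclideanSpace ℝ (Fin d)) :
    (⨅ c : {c : Fin k → EuclideanSpace ℝ (Fin d) // ∀ j, c j ≠ 0},
        ∑ i, ⨅ j : Fin k, ‖x i - ((inner ℝ (x i) (c.1 j) : ℝ) / ‖c.1 j‖ ^ 2) • c.1 j‖ ^ 2) =
      ∑ i, ‖x i‖ ^ 2 -
        ⨆ g : Fin n → Fin k, ∑ j,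
          ⨆ v : {v : EuclideanSpace ℝ (Fin d) // ‖v‖ = 1},
            ∑ i ∈ Finset.univ.filter (fun i => g i = j), (inner ℝ (x i) v.1 : ℝ) ^ 2 := by
  haveI : Nonempty (Fin k) := ⟨⟨0, hk⟩⟩
  set U := {v : EuclideanSpace ℝ (Fin d) // ‖v‖ = 1} with hU
  have he : ‖(EuclideanSpace.single (⟨0, hd⟩ : Fin d) (1:ℝ) : EuclideanSpace ℝ (Fin d))‖ = 1 := by
    simp
  set e : U := ⟨_, he⟩ with hee
  haveI : Nonempty U := ⟨e⟩
  set C : ℝ := ∑ i, ‖x i‖ ^ 2 with hC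
  -- Cauchy-Schwarz bound
  have hone : ∀ (v : U) (i : Fin n), (inner ℝ (x i) v.1 : ℝ) ^ 2 ≤ ‖x i‖ ^ 2 := by
    intro v i
    have h := abs_real_inner_le_norm (x i) v.1
    rw [v.2, mul_one] at h
    calc (inner ℝ (x i) v.1 : ℝ) ^ 2 = |(inner ℝ (x i) v.1 : ℝ)| ^ 2 := (sq_abs _).symm
      _ ≤ ‖x i‖ ^ 2 := by nlinarith [abs_nonneg (inner ℝ (x i) v.1 : ℝ), norm_nonneg (x i)]
  have hbdd : ∀ s : Finset (Fin n),
      BddAbove (Set.range fun v : U => ∑ i ∈ s, (inner ℝ (x i) v.1 : ℝ) ^ 2) := by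
    intro s
    refine ⟨∑ i ∈ s, ‖x i‖ ^ 2, ?_⟩
    rintro _ ⟨v, rfl⟩
    exact Finset.sum_le_sum fun i _ => hone v i
  set F : (Fin n → Fin k) → ℝ := fun g => ∑ j, ⨆ v : U,
      ∑ i ∈ Finset.univ.filter (fun i => g i = j), (inner ℝ (x i) v.1 : ℝ) ^ 2 with hF
  have hFle : ∀ g, F g ≤ C := by
    intro g
    calc F g ≤ ∑ j, ∑ i ∈ Finset.univ.filter (fun i => g i = j), ‖x i‖ ^ 2 :=
          Finset.sum_le_sum fun j _ => ciSup_le fun v =>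
            Finset.sum_le_sum fun i _ => hone v i
      _ = C := Finset.sum_fiberwise _ _ _
  have hSbdd : BddAbove (Set.range F) := ⟨C, by rintro _ ⟨g, rfl⟩; exact hFle g⟩
  set S : ℝ := ⨆ g, F g with hS
  -- key1 : any family of unit vectors gives at most S
  have key1 : ∀ u : Fin k → U,
      (∑ i, ⨆ j, (inner ℝ (x i) (u j).1 : ℝ) ^ 2) ≤ S := by
    intro u
    choose g hg using fun i => Finite.exists_max (fun j => (inner ℝ (x i) (u j).1 : ℝ) ^ 2)
    have hsup : ∀ i, (⨆ j, (inner ℝ (x i) (u j).1 : ℝ) ^ 2)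
        = (inner ℝ (x i) (u (g i)).1 : ℝ) ^ 2 := fun i =>
      le_antisymm (ciSup_le (hg i))
        (le_ciSup (f := fun j => (inner ℝ (x i) (u j).1 : ℝ) ^ 2)
          (Set.Finite.bddAbove (Set.finite_range _)) (g i))
    calc (∑ i, ⨆ j, (inner ℝ (x i) (u j).1 : ℝ) ^ 2)
        = ∑ i, (inner ℝ (x i) (u (g i)).1 : ℝ) ^ 2 := Finset.sum_congr rfl fun i _ => hsup i
      _ = ∑ j, ∑ i ∈ Finset.univ.filter (fun i => g i = j),
            (inner ℝ (x i) (u (g i)).1 : ℝ) ^ 2 := (Finset.sum_fiberwise _ _ _).symm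
      _ = ∑ j, ∑ i ∈ Finset.univ.filter (fun i => g i = j),
            (inner ℝ (x i) (u j).1 : ℝ) ^ 2 := by
          refine Finset.sum_congr rfl fun j _ => Finset.sum_congr rfl fun i hi => ?_
          rw [Finset.mem_filter] at hi
          rw [hi.2]
      _ ≤ F g := Finset.sum_le_sum fun j _ => le_ciSup (hbdd _) (u j)
      _ ≤ S := le_ciSup hSbdd g
  -- attainment of per-part sup
  have attain : ∀ s : Finset (Fin n), ∃ v : U,
      (⨆ w : U, ∑ i ∈ s, (inner ℝ (x i) w.1 : ℝ) ^ 2)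
        = ∑ i ∈ s, (inner ℝ (x i) v.1 : ℝ) ^ 2 := by
    intro s
    have hcont : Continuous (fun v : EuclideanSpace ℝ (Fin d) =>
        ∑ i ∈ s, (inner ℝ (x i) v : ℝ) ^ 2) :=
      continuous_finset_sum _ fun i _ => (continuous_const.inner continuous_id).pow 2
    obtain ⟨v, hv, hmax⟩ := (isCompact_sphere (0 : EuclideanSpace ℝ (Fin d)) 1).exists_isMaxOn
      ⟨e.1, mem_sphere_zero_iff_norm.2 e.2⟩ hcont.continuousOn
    exact ⟨⟨v, mem_sphere_zero_iff_norm.1 hv⟩,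
      le_antisymm (ciSup_le fun w => hmax (mem_sphere_zero_iff_norm.2 w.2))
        (le_ciSup (hbdd s) _)⟩
  -- value of the objective at a family of unit vectors
  have hval : ∀ v : Fin k → U,
      (∑ i, ⨅ j, ‖x i - ((inner ℝ (x i) ((v j).1) : ℝ) / ‖(v j).1‖ ^ 2) • (v j).1‖ ^ 2)
        = C - ∑ i, ⨆ j, (inner ℝ (x i) ((v j).1) : ℝ) ^ 2 := by
    intro v
    have h1 : ∀ i, (⨅ j, ‖x i - ((inner ℝ (x i) ((v j).1) : ℝ) / ‖(v j).1‖ ^ 2) • (v j).1‖ ^ 2)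
        = ‖x i‖ ^ 2 - ⨆ j, (inner ℝ (x i) ((v j).1) : ℝ) ^ 2 := by
      intro i
      have h2 : ∀ j : Fin k,
          ‖x i - ((inner ℝ (x i) ((v j).1) : ℝ) / ‖(v j).1‖ ^ 2) • (v j).1‖ ^ 2
            = ‖x i‖ ^ 2 - (inner ℝ (x i) ((v j).1) : ℝ) ^ 2 := by
        intro j
        have hnz : (v j).1 ≠ 0 := fun h => by
          have h2 := (v j).2; rw [h] at h2; simp at h2
        rw [pt_lemma _ _ hnz, (v j).2]
        simp
      rw [iInf_congr h2]
      exact myInfSub _ hk _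
    rw [Finset.sum_congr rfl fun i _ => h1 i, Finset.sum_sub_distrib]
  haveI : Nonempty {c : Fin k → EuclideanSpace ℝ (Fin d) // ∀ j, c j ≠ 0} :=
    ⟨⟨fun _ => e.1, fun _ h => by
      have h2 := e.2
      rw [show (e.1 : EuclideanSpace ℝ (Fin d)) = 0 from h, norm_zero] at h2
      exact one_ne_zero h2.symm⟩⟩
  refine le_antisymm ?_ ?_
  · -- LHS ≤ C - S
    rw [le_sub_comm]
    refine ciSup_le fun g => ?_
    rw [le_sub_comm]
    choose v hv using fun j => attain (Finset.univ.filter (fun i => g i = j))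
    have hstep : F g ≤ ∑ i, ⨆ j, (inner ℝ (x i) ((v j).1) : ℝ) ^ 2 := by
      calc F g = ∑ j, ∑ i ∈ Finset.univ.filter (fun i => g i = j),
            (inner ℝ (x i) ((v j).1) : ℝ) ^ 2 := Finset.sum_congr rfl fun j _ => hv j
        _ = ∑ j, ∑ i ∈ Finset.univ.filter (fun i => g i = j),
            (inner ℝ (x i) ((v (g i)).1) : ℝ) ^ 2 := by
            refine Finset.sum_congr rfl fun j _ => Finset.sum_congr rfl fun i hi => ?_
            rw [Finset.mem_filter] at hi
            rw [hi.2]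
        _ = ∑ i, (inner ℝ (x i) ((v (g i)).1) : ℝ) ^ 2 := Finset.sum_fiberwise _ _ _
        _ ≤ ∑ i, ⨆ j, (inner ℝ (x i) ((v j).1) : ℝ) ^ 2 :=
            Finset.sum_le_sum fun i _ =>
              le_ciSup (f := fun j => (inner ℝ (x i) ((v j).1) : ℝ) ^ 2)
                (Set.Finite.bddAbove (Set.finite_range _)) (g i)
    have hlb : BddBelow (Set.range fun c : {c : Fin k → EuclideanSpace ℝ (Fin d) // ∀ j, c j ≠ 0} =>
        ∑ i, ⨅ j : Fin k, ‖x i - ((inner ℝ (x i) (c.1 j) : ℝ) / ‖c.1 j‖ ^ 2) • c.1 j‖ ^ 2) := by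
      refine ⟨0, ?_⟩
      rintro _ ⟨c, rfl⟩
      exact Finset.sum_nonneg fun i _ => Real.iInf_nonneg fun j => sq_nonneg _
    have hnz : ∀ j, ((v j).1 : EuclideanSpace ℝ (Fin d)) ≠ 0 := fun j h => by
      have := (v j).2; rw [h] at this; simp at this
    calc (⨅ c : {c : Fin k → EuclideanSpace ℝ (Fin d) // ∀ j, c j ≠ 0},
          ∑ i, ⨅ j : Fin k, ‖x i - ((inner ℝ (x i) (c.1 j) : ℝ) / ‖c.1 j‖ ^ 2) • c.1 j‖ ^ 2)
        ≤ ∑ i, ⨅ j : Fin k, ‖x i - ((inner ℝ (x i) ((v j).1) : ℝ) / ‖(v j).1‖ ^ 2) • (v j).1‖ ^ 2 :=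
          ciInf_le hlb ⟨fun j => (v j).1, hnz⟩
      _ = C - ∑ i, ⨆ j, (inner ℝ (x i) ((v j).1) : ℝ) ^ 2 := hval v
      _ ≤ C - F g := by linarith
  · -- C - S ≤ LHS
    refine le_ciInf fun c => ?_
    set u : Fin k → U := fun j => ⟨‖c.1 j‖⁻¹ • c.1 j, norm_smul_inv_norm (c.2 j)⟩ with hu
    have h1 : ∀ i, (⨅ j, ‖x i - ((inner ℝ (x i) (c.1 j) : ℝ) / ‖c.1 j‖ ^ 2) • c.1 j‖ ^ 2)
        = ‖x i‖ ^ 2 - ⨆ j, (inner ℝ (x i) ((u j).1) : ℝ) ^ 2 := by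
      intro i
      have h2 : ∀ j : Fin k,
          ‖x i - ((inner ℝ (x i) (c.1 j) : ℝ) / ‖c.1 j‖ ^ 2) • c.1 j‖ ^ 2
            = ‖x i‖ ^ 2 - (inner ℝ (x i) ((u j).1) : ℝ) ^ 2 := fun j =>
        pt_lemma _ _ (c.2 j)
      rw [iInf_congr h2]
      exact myInfSub _ hk _
    rw [Finset.sum_congr rfl fun i _ => h1 i, Finset.sum_sub_distrib]
    have := key1 u
    simp only [← hC]
    linarith
end

section
/- Let x ≠ 0, c ≠ 0, h_∥ ≥ h_⊥ > 0, and let α* = h_∥⟨x,c⟩ / ((h_∥-h_⊥)⟨x,c⟩²/‖x‖² + h_⊥‖c‖²) be the optimal anisotropic scaling and α_proj = ⟨x,c⟩/‖c‖² the ordinary projection coefficient. If ⟨x,c⟩ > 0, then α* ≥ α_proj, i.e., the anisotropic optimum pushes the scaled center at least as far from the origin as the orthogonal projection. -/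
/-- For `x, c ≠ 0`, `h_∥ ≥ h_⊥ > 0` and `⟨x,c⟩ > 0`, the optimal anisotropic scaling
`α* = h_∥⟨x,c⟩ / ((h_∥-h_⊥)⟨x,c⟩²/‖x‖² + h_⊥‖c‖²)` is at least the projection
coefficient `α_proj = ⟨x,c⟩/‖c‖²`. -/
theorem stmt18 {d : ℕ} (x c : EuclideanSpace ℝ (Fin d)) (hx : x ≠ 0) (hc : c ≠ 0)
    (hpar hperp : ℝ) (h1 : 0 < hperp) (h2 : hperp ≤ hpar)
    (hip : 0 < (inner ℝ x c : ℝ)) :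
    (inner ℝ x c : ℝ) / ‖c‖ ^ 2 ≤
      hpar * (inner ℝ x c : ℝ) /
        ((hpar - hperp) * (inner ℝ x c : ℝ) ^ 2 / ‖x‖ ^ 2 + hperp * ‖c‖ ^ 2) := by
  have hxn : (0:ℝ) < ‖x‖ := norm_pos_iff.mpr hx
  have hcn : (0:ℝ) < ‖c‖ := norm_pos_iff.mpr hc
  have hcs : (inner ℝ x c : ℝ) ≤ ‖x‖ * ‖c‖ := real_inner_le_norm x c
  have h3 : (0:ℝ) ≤ hpar - hperp := by linarith
  have hD : 0 < (hpar - hperp) * (inner ℝ x c : ℝ) ^ 2 / ‖x‖ ^ 2 + hperp * ‖c‖ ^ 2 := by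
    positivity
  rw [div_le_div_iff₀ (by positivity) hD]
  have key : (inner ℝ x c : ℝ) ^ 2 ≤ ‖x‖ ^ 2 * ‖c‖ ^ 2 := by nlinarith
  rw [div_add' _ _ _ (by positivity), mul_div_assoc', div_le_iff₀ (by positivity)]
  nlinarith [mul_nonneg (mul_nonneg h3 (sub_nonneg.mpr key)) hip.le]
end
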